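/- Define A, B : ℕ → ℚ by A(-1)=1, A(0)=2, B(-1)=0, B(0)=1, and A(n)=A(n-1)+(1/n)A(n-2), B(n)=B(n-1)+(1/n)B(n-2) for n≥1. Then the sequence A(n)/B(n) (as real numbers) converges to e. -/

import Mathlib

theorem stmt14 (A B : ℤ → ℚ)
    (hA1 : A (-1) = 1) (hA0 : A 0 = 2) (hB1 : B (-1) = 0) (hB0 : B 0 = 1)
    (hArec : ∀ n : ℤ, 1 ≤ n → A n = A (n - 1) + (1 / (n : ℚ)) * A (n - 2))
    (hBrec : ∀ n : ℤ, 1 ≤ n → B n = B (n - 1) + (1 / (n : ℚ)) * B (n - 2)) :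
    Filter.Tendsto (fun n : ℕ => ((A (n : ℤ) : ℝ) / (B (n : ℤ) : ℝ)))
      Filter.atTop (nhds (Real.exp 1)) := by
  set T : ℕ → ℚ := fun n => ∑ k ∈ Finset.range (n + 1), (-1 : ℚ) ^ k / k.factorial with hT
  set P : ℕ → Prop := fun n =>
    A (n : ℤ) = (n : ℚ) + 2 ∧ B (n : ℤ) = ((n : ℚ) + 2) * T n - (-1) ^ n / n.factorial with hP
  have key : ∀ n : ℕ, P n ∧ P (n + 1) := by
    intro n
    induction n with
    | zero =>
      have h1A := hArec 1 (by norm_num)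
      have h1B := hBrec 1 (by norm_num)
      norm_num [hA0, hA1, hB0, hB1] at h1A h1B
      refine ⟨⟨?_, ?_⟩, ?_, ?_⟩ <;>
        norm_num [hP, hT, Finset.sum_range_succ, hA0, hB0, h1A, h1B]
    | succ n ih =>
      refine ⟨ih.2, ?_, ?_⟩
      · have hr := hArec ((n : ℤ) + 2) (by omega)
        have e1 : ((n : ℤ) + 2) - 1 = ((n : ℕ) + 1 : ℕ) := by push_cast; ring
        have e2 : ((n : ℤ) + 2) - 2 = ((n : ℕ) : ℤ) := by ring
        rw [e1, e2] at hr
        rw [show ((n + 1 + 1 : ℕ) : ℤ) = (n : ℤ) + 2 by push_cast; ring, hr, ih.1.1, ih.2.1]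
        have hn2 : ((n : ℚ) + 2) ≠ 0 := by positivity
        push_cast
        field_simp
        ring
      · have hr := hBrec ((n : ℤ) + 2) (by omega)
        have e1 : ((n : ℤ) + 2) - 1 = ((n : ℕ) + 1 : ℕ) := by push_cast; ring
        have e2 : ((n : ℤ) + 2) - 2 = ((n : ℕ) : ℤ) := by ring
        rw [e1, e2] at hr
        rw [show ((n + 1 + 1 : ℕ) : ℤ) = (n : ℤ) + 2 by push_cast; ring, hr, ih.1.2, ih.2.2]
        have hn2 : ((n : ℚ) + 2) ≠ 0 := by positivity
        have hq : ((n.factorial : ℚ)) ≠ 0 := by exact_mod_cast n.factorial_ne_zero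
        have hT2 : T (n + 2) = T (n + 1) + (-1 : ℚ) ^ (n + 2) / (n+2).factorial := by
          simp [hT, Finset.sum_range_succ]
        have hT1 : T (n + 1) = T n + (-1 : ℚ) ^ (n + 1) / (n+1).factorial := by
          simp [hT, Finset.sum_range_succ]
        have hf1 : ((n+1).factorial : ℚ) = ((n : ℚ) + 1) * n.factorial := by
          push_cast [Nat.factorial_succ]; ring
        have hf2 : ((n+2).factorial : ℚ) = ((n : ℚ) + 2) * (((n : ℚ) + 1) * n.factorial) := by
          rw [show n + 2 = (n+1) + 1 from rfl, Nat.factorial_succ, Nat.factorial_succ]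
          push_cast; ring
        rw [show n + 1 + 1 = n + 2 from rfl, hT2, hT1, hf2, hf1]
        push_cast
        field_simp
        ring
  have hS : Filter.Tendsto (fun n : ℕ => ((T n : ℚ) : ℝ)) Filter.atTop (nhds (Real.exp (-1))) := by
    have hc : ∀ n : ℕ, ((T n : ℚ) : ℝ) = ∑ k ∈ Finset.range (n + 1), (-1 : ℝ) ^ k / k.factorial := by
      intro n; push_cast [hT]; norm_num
    simp_rw [hc]
    rw [Filter.tendsto_add_atTop_iff_nat
      (f := fun n => ∑ k ∈ Finset.range n, (-1 : ℝ) ^ k / k.factorial) 1]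
    apply HasSum.tendsto_sum_nat
    rw [Real.exp_eq_exp_ℝ]
    exact NormedSpace.expSeries_div_hasSum_exp (-1 : ℝ)
  have heps : Filter.Tendsto (fun n : ℕ => (-1 : ℝ) ^ n / (((n : ℝ) + 2) * n.factorial))
      Filter.atTop (nhds 0) := by
    apply squeeze_zero_norm (a := fun n : ℕ => 1 / ((n : ℝ) + 1))
    · intro n
      have h1 : (0:ℝ) < (n : ℝ) + 2 := by positivity
      have h2 : (1:ℝ) ≤ (n.factorial : ℝ) := by exact_mod_cast n.factorial_pos
      rw [norm_div, norm_pow, norm_neg, norm_one, one_pow]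
      rw [Real.norm_of_nonneg (by positivity)]
      rw [div_le_div_iff₀ (by positivity) (by positivity)]
      nlinarith
    · exact tendsto_one_div_add_atTop_nhds_zero_nat
  have hd : Filter.Tendsto
      (fun n : ℕ => ((T n : ℚ) : ℝ) - (-1 : ℝ) ^ n / (((n : ℝ) + 2) * n.factorial))
      Filter.atTop (nhds (Real.exp (-1))) := by
    simpa using hS.sub heps
  have hfinal : Filter.Tendsto
      (fun n : ℕ => 1 / (((T n : ℚ) : ℝ) - (-1 : ℝ) ^ n / (((n : ℝ) + 2) * n.factorial)))
      Filter.atTop (nhds (Real.exp 1)) := by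
    have := Filter.Tendsto.div (tendsto_const_nhds (x := (1:ℝ))) hd (Real.exp_ne_zero (-1))
    rwa [Real.exp_neg, one_div, inv_inv] at this
  refine hfinal.congr fun n => ?_
  obtain ⟨hA, hB⟩ := (key n).1
  have hn2 : ((n : ℝ) + 2) ≠ 0 := by positivity
  have hq : ((n.factorial : ℝ)) ≠ 0 := by exact_mod_cast n.factorial_ne_zero
  have hAr : (A n : ℝ) = (n : ℝ) + 2 := by rw [hA]; push_cast; ring
  have hBr : (B n : ℝ) = ((n : ℝ) + 2) *
      (((T n : ℚ) : ℝ) - (-1 : ℝ) ^ n / (((n : ℝ) + 2) * n.factorial)) := by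
    rw [hB]; push_cast; field_simp
  have hdd := mul_div_mul_left (1:ℝ)
    (((T n : ℚ) : ℝ) - (-1 : ℝ) ^ n / (((n : ℝ) + 2) * n.factorial)) hn2
  rw [mul_one] at hdd
  rw [hAr, hBr, hdd]
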